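/- For every natural number n ≥ 2 and every integer k with 1 ≤ k ≤ n−1, ∑_{l=1}^{n-1} cot(πl/n)·sin(2πlk/n) = n − 2k. -/

import Mathlib

open Real Finset

lemma cot_sin_eq (θ : ℝ) (hθ : Real.sin θ ≠ 0) (k : ℕ) (hk : 1 ≤ k) :
    Real.cot θ * Real.sin (2 * k * θ) =
      1 + 2 * ∑ j ∈ Finset.Ico 1 k, Real.cos (2 * j * θ) + Real.cos (2 * k * θ) := by
  induction k with
  | zero => omega
  | succ m ih =>
    rcases Nat.lt_or_ge m 1 with h1 | h1
    · interval_cases m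
      simp only [Finset.Ico_self, Finset.sum_empty, mul_zero, add_zero]
      push_cast
      rw [Real.cot_eq_cos_div_sin, show (2:ℝ)*1*θ = 2*θ by ring, Real.sin_two_mul,
        Real.cos_two_mul]
      field_simp
      ring
    · have hIH := ih h1
      have hcot : Real.cot θ * Real.sin θ = Real.cos θ := by
        rw [Real.cot_eq_cos_div_sin]; field_simp
      have hstep : Real.sin (2 * (m + 1 : ℕ) * θ) =
          Real.sin (2 * m * θ) + 2 * Real.cos ((2 * m + 1) * θ) * Real.sin θ := by
        have h1 := Real.sin_add ((2 * m + 1) * θ) θ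
        have h2 := Real.sin_sub ((2 * m + 1) * θ) θ
        have e1 : (2 * (m : ℝ) + 1) * θ + θ = 2 * ((m : ℕ) + 1 : ℕ) * θ := by
          push_cast; ring
        have e2 : (2 * (m : ℝ) + 1) * θ - θ = 2 * m * θ := by ring
        rw [e1] at h1
        rw [e2] at h2
        linarith
      have hprod : 2 * Real.cos θ * Real.cos ((2 * m + 1) * θ) =
          Real.cos (2 * (m + 1 : ℕ) * θ) + Real.cos (2 * m * θ) := by
        have h1 := Real.cos_add ((2 * m + 1) * θ) θ
        have h2 := Real.cos_sub ((2 * m + 1) * θ) θ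
        have e1 : (2 * (m : ℝ) + 1) * θ + θ = 2 * ((m : ℕ) + 1 : ℕ) * θ := by
          push_cast; ring
        have e2 : (2 * (m : ℝ) + 1) * θ - θ = 2 * m * θ := by ring
        rw [e1] at h1
        rw [e2] at h2
        linarith
      rw [Finset.sum_Ico_succ_top h1]
      have : Real.cot θ * Real.sin (2 * (m + 1 : ℕ) * θ) =
          Real.cot θ * Real.sin (2 * m * θ) +
            (Real.cos (2 * (m + 1 : ℕ) * θ) + Real.cos (2 * m * θ)) := by
        rw [hstep, mul_add, ← hprod]
        linear_combination 2 * Real.cos ((2 * (m:ℝ) + 1) * θ) * hcot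
      rw [this, hIH]
      ring

lemma sum_cos_range (n j : ℕ) (hj1 : 1 ≤ j) (hj2 : j < n) :
    ∑ l ∈ Finset.range n, Real.cos (2 * π * j * l / n) = 0 := by
  have hn0 : (n : ℂ) ≠ 0 := by
    exact_mod_cast Nat.cast_ne_zero.mpr (by omega)
  set x : ℂ := Complex.exp (2 * π * Complex.I * j / n) with hx
  have hx1 : x ≠ 1 := by
    intro h
    rw [hx, Complex.exp_eq_one_iff] at h
    obtain ⟨m, hm⟩ := h
    have h2 : (j : ℂ) = m * n := by
      field_simp at hm
      have hne : (2 * (π : ℂ) * Complex.I) ≠ 0 := by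
        simp [Complex.I_ne_zero, Complex.ofReal_ne_zero, Real.pi_ne_zero]
      have : 2 * (π:ℂ) * Complex.I * j = 2 * (π:ℂ) * Complex.I * (m * n) := by
        ring_nf
        ring_nf at hm
        linear_combination 2 * (π:ℂ) * Complex.I * hm
      exact mul_left_cancel₀ hne this
    have h3 : (j : ℤ) = m * n := by exact_mod_cast h2
    have h4 : (n : ℤ) ∣ (j : ℤ) := ⟨m, by linarith⟩
    have h5 : (n : ℤ) ≤ (j : ℤ) := Int.le_of_dvd (by exact_mod_cast hj1) h4
    omega
  have hxl : ∀ l : ℕ, x ^ l = Complex.exp (((2 * π * j * l / n : ℝ) : ℂ) * Complex.I) := by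
    intro l
    rw [hx, ← Complex.exp_nat_mul]
    congr 1
    push_cast
    field_simp
  have hxn : x ^ n = 1 := by
    rw [hxl]
    have : ((2 * π * j * n / n : ℝ) : ℂ) * Complex.I = (j : ℤ) * (2 * π * Complex.I) := by
      push_cast
      field_simp
    rw [this, Complex.exp_int_mul_two_pi_mul_I]
  have hsum : ∑ l ∈ Finset.range n, x ^ l = 0 := by
    rw [geom_sum_eq hx1, hxn]
    simp
  have : ∑ l ∈ Finset.range n, Real.cos (2 * π * j * l / n) =
      (∑ l ∈ Finset.range n, x ^ l).re := by
    rw [Complex.re_sum]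
    apply Finset.sum_congr rfl
    intro l _
    rw [hxl l, Complex.exp_ofReal_mul_I_re]
  rw [this, hsum]
  simp

lemma sum_cos_Ico (n j : ℕ) (hn : 2 ≤ n) (hj1 : 1 ≤ j) (hj2 : j < n) :
    ∑ l ∈ Finset.Ico 1 n, Real.cos (2 * (j : ℝ) * (π * l / n)) = -1 := by
  have key : ∑ l ∈ Finset.range n, Real.cos (2 * π * j * l / n) = 0 :=
    sum_cos_range n j hj1 hj2
  rw [Finset.range_eq_Ico, Finset.sum_eq_sum_Ico_succ_bot (by omega : 0 < n)] at key
  have h0 : Real.cos (2 * π * j * (0:ℕ) / n) = 1 := by norm_num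
  rw [h0] at key
  have : ∑ l ∈ Finset.Ico 1 n, Real.cos (2 * (j : ℝ) * (π * l / n)) =
      ∑ l ∈ Finset.Ico (0+1) n, Real.cos (2 * π * j * l / n) := by
    apply Finset.sum_congr (by norm_num)
    intro l _
    congr 1
    ring
  rw [this]
  linarith

theorem eisenstein_sum (n k : ℕ) (hn : 2 ≤ n) (hk1 : 1 ≤ k) (hk2 : k ≤ n - 1) :
    ∑ l ∈ Finset.Ico 1 n, Real.cot (π * l / n) * Real.sin (2 * π * l * k / n) =
      (n : ℝ) - 2 * k := by
  have hn0 : (n : ℝ) ≠ 0 := by positivity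
  have hkn : k < n := by omega
  have step1 : ∀ l ∈ Finset.Ico 1 n,
      Real.cot (π * l / n) * Real.sin (2 * π * l * k / n) =
        1 + 2 * ∑ j ∈ Finset.Ico 1 k, Real.cos (2 * j * (π * l / n)) +
          Real.cos (2 * k * (π * l / n)) := by
    intro l hl
    rw [Finset.mem_Ico] at hl
    have hsin : Real.sin (π * l / n) ≠ 0 := by
      apply ne_of_gt
      apply Real.sin_pos_of_pos_of_lt_pi
      · have : (0:ℝ) < l := by exact_mod_cast hl.1
        positivity
      · rw [div_lt_iff₀ (by positivity : (0:ℝ) < n)]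
        have : (l : ℝ) < n := by exact_mod_cast hl.2
        nlinarith [Real.pi_pos]
    have harg : 2 * π * l * k / n = 2 * k * (π * l / n) := by ring
    rw [harg]
    exact cot_sin_eq _ hsin k hk1
  rw [Finset.sum_congr rfl step1]
  rw [Finset.sum_add_distrib, Finset.sum_add_distrib]
  have h1 : ∑ l ∈ Finset.Ico 1 n, (1:ℝ) = (n : ℝ) - 1 := by
    rw [Finset.sum_const, Nat.card_Ico, nsmul_eq_mul, mul_one]
    have : 1 ≤ n := by omega
    push_cast [Nat.cast_sub this]
    ring
  have h2 : ∑ l ∈ Finset.Ico 1 n,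
      (2 * ∑ j ∈ Finset.Ico 1 k, Real.cos (2 * j * (π * l / n))) = -2 * ((k:ℝ) - 1) := by
    have : ∑ l ∈ Finset.Ico 1 n, ∑ j ∈ Finset.Ico 1 k, Real.cos (2 * j * (π * l / n))
        = ∑ j ∈ Finset.Ico 1 k, ∑ l ∈ Finset.Ico 1 n, Real.cos (2 * j * (π * l / n)) :=
      Finset.sum_comm
    rw [← Finset.mul_sum, this]
    have : ∀ j ∈ Finset.Ico 1 k,
        ∑ l ∈ Finset.Ico 1 n, Real.cos (2 * (j:ℝ) * (π * l / n)) = -1 := by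
      intro j hj
      rw [Finset.mem_Ico] at hj
      exact sum_cos_Ico n j hn hj.1 (by omega)
    rw [Finset.sum_congr rfl this, Finset.sum_const, Nat.card_Ico, nsmul_eq_mul]
    have : 1 ≤ k := hk1
    push_cast [Nat.cast_sub this]
    ring
  have h3 : ∑ l ∈ Finset.Ico 1 n, Real.cos (2 * (k:ℝ) * (π * l / n)) = -1 :=
    sum_cos_Ico n k hn hk1 hkn
  rw [h1, h2, h3]
  ring
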